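/- Under the rank condition rank(J_μ) + rank(J_{κu}) = rank(J), the μ-component of the minimum-norm solution Δx_tot = −H⁺b equals the back-substitution formula H_{μμ}⁺(−b_μ − H_{μ,κu}Δx_{κu,tot}), where Δx_{κu,tot} is the (κ,u)-component of Δx_tot. -/

import Mathlib

open Matrix

/-- The four Penrose conditions characterizing the Moore–Penrose pseudo-inverse. -/
def IsMoorePenrose {m n : Type*} [Fintype m] [Fintype n]
    (A : Matrix m n ℝ) (P : Matrix n m ℝ) : Prop :=
  A * P * A = A ∧ P * A * P = P ∧ (A * P)ᵀ = A * P ∧ (P * A)ᵀ = P * A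

/-- If `H P H = H` for `H = JᵀJ` and `P H` is symmetric, then `J (P H) = J`. -/
lemma aux_JPH {m n : Type*} [Fintype m] [Fintype n]
    (J : Matrix m n ℝ) (P : Matrix n n ℝ)
    (h1 : Jᵀ * J * P * (Jᵀ * J) = Jᵀ * J)
    (h2 : (P * (Jᵀ * J))ᵀ = P * (Jᵀ * J)) :
    J * (P * (Jᵀ * J)) = J := by
  set Q := P * (Jᵀ * J) with hQ
  have hHQ : Jᵀ * J * Q = Jᵀ * J := by
    rw [hQ, ← Matrix.mul_assoc, h1]
  have key : (J - J * Q)ᵀ * (J - J * Q) = 0 := by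
    rw [transpose_sub, transpose_mul, h2]
    calc (Jᵀ - Q * Jᵀ) * (J - J * Q)
        = Jᵀ * J - Jᵀ * (J * Q) - (Q * (Jᵀ * J) - Q * (Jᵀ * (J * Q))) := by
          simp only [Matrix.sub_mul, Matrix.mul_sub, Matrix.mul_assoc]
          abel
      _ = 0 := by
          have hHQ' : Jᵀ * (J * Q) = Jᵀ * J := by rw [← Matrix.mul_assoc]; exact hHQ
          rw [hHQ']; abel
  have key' : (J - J * Q)ᴴ * (J - J * Q) = 0 := by
    rwa [conjTranspose_eq_transpose_of_trivial]
  have h0 := Matrix.conjTranspose_mul_self_eq_zero.mp key'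
  exact (sub_eq_zero.mp h0).symm

theorem stmt_8 {N nμ nku : ℕ}
    (Jμ : Matrix (Fin N) (Fin nμ) ℝ) (Jku : Matrix (Fin N) (Fin nku) ℝ)
    (r : Fin N → ℝ)
    -- rank condition: rank(Jμ) + rank(Jku) = rank(J)
    (hrank : Jμ.rank + Jku.rank = (fromCols Jμ Jku).rank)
    -- H⁺, the Moore–Penrose pseudo-inverse of H = JᵀJ
    (Hp : Matrix (Fin nμ ⊕ Fin nku) (Fin nμ ⊕ Fin nku) ℝ)
    (hHp : IsMoorePenrose ((fromCols Jμ Jku)ᵀ * fromCols Jμ Jku) Hp)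
    -- H_{μμ}⁺, the Moore–Penrose pseudo-inverse of H_{μμ} = JμᵀJμ
    (Pμ : Matrix (Fin nμ) (Fin nμ) ℝ) (hPμ : IsMoorePenrose (Jμᵀ * Jμ) Pμ)
    -- Δx_tot = −H⁺b (minimum-norm solution)
    (Δx : Fin nμ ⊕ Fin nku → ℝ)
    (hΔx : Δx = -(Hp *ᵥ ((fromCols Jμ Jku)ᵀ *ᵥ r))) :
    (fun i => Δx (Sum.inl i)) =
      Pμ *ᵥ (-(Jμᵀ *ᵥ r) - (Jμᵀ * Jku) *ᵥ fun j => Δx (Sum.inr j)) := by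
  set J := fromCols Jμ Jku with hJ
  set H := Jᵀ * J with hH
  obtain ⟨h1, h2, h3, h4⟩ := hHp
  have hHt : Hᵀ = H := by rw [hH, transpose_mul, transpose_transpose]
  -- Step A : (Hp * H) * Jᵀ = Jᵀ
  have hA0 : J * (Hp * H) = J := aux_JPH J Hp h1 h4
  have hA : Hp * H * Jᵀ = Jᵀ := by
    have := congrArg Matrix.transpose hA0
    rwa [transpose_mul, h4] at this
  have hHpHH : Hp * H * H = H := by
    have := congrArg (· * J) hA
    simpa only [Matrix.mul_assoc, ← hH] using this
  -- H * Hpᵀ = Hp * H  and  Hpᵀ * H = H * Hp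
  have hHHpT : H * Hpᵀ = Hp * H := by
    calc H * Hpᵀ = (Hp * Hᵀ)ᵀ := by rw [transpose_mul, transpose_transpose]
    _ = (Hp * H)ᵀ := by rw [hHt]
    _ = Hp * H := h4
  have hHpTH : Hpᵀ * H = H * Hp := by
    calc Hpᵀ * H = (Hᵀ * Hp)ᵀ := by rw [transpose_mul, transpose_transpose]
    _ = (H * Hp)ᵀ := by rw [hHt]
    _ = H * Hp := h3
  -- Step B : H * Hp * Jᵀ = Jᵀ
  have hB0 : J * (Hpᵀ * H) = J := by
    apply aux_JPH J Hpᵀ <;> rw [← hH]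
    · rw [hHHpT, hHpHH]
    · rw [hHpTH]
      exact h3
  have hB : H * Hp * Jᵀ = Jᵀ := by
    rw [hHpTH] at hB0
    have := congrArg Matrix.transpose hB0
    rwa [transpose_mul, h3] at this
  -- Step C : Δx lies in the range of Jᵀ
  set W := J * Hpᵀ * (Hp * Jᵀ) with hW
  have hC : Hp * Jᵀ = Jᵀ * W := by
    calc Hp * Jᵀ = Hp * H * Hp * Jᵀ := by rw [h2]
    _ = (Hp * H) * (Hp * Jᵀ) := by rw [Matrix.mul_assoc]
    _ = (H * Hpᵀ) * (Hp * Jᵀ) := by rw [hHHpT]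
    _ = Jᵀ * W := by rw [hW, hH]; simp only [Matrix.mul_assoc]
  set w : Fin N → ℝ := -(W *ᵥ r) with hw
  have hxw : Δx = Jᵀ *ᵥ w := by
    rw [hΔx, hw, Matrix.mulVec_neg, Matrix.mulVec_mulVec, Matrix.mulVec_mulVec, hC]
  have hJt : Jᵀ = fromRows Jμᵀ Jkuᵀ := transpose_fromCols Jμ Jku
  have hxμ : (fun i => Δx (Sum.inl i)) = Jμᵀ *ᵥ w := by
    funext i
    rw [hxw, hJt, fromRows_mulVec]
    rfl
  have hxku : (fun j => Δx (Sum.inr j)) = Jkuᵀ *ᵥ w := by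
    funext j
    rw [hxw, hJt, fromRows_mulVec]
    rfl
  -- the normal equations H Δx = -Jᵀ r, top block
  have hnorm : H *ᵥ Δx = -(Jᵀ *ᵥ r) := by
    rw [hΔx, Matrix.mulVec_neg, Matrix.mulVec_mulVec, Matrix.mulVec_mulVec,
      hB]
  have hHblocks : H = fromBlocks (Jμᵀ * Jμ) (Jμᵀ * Jku) (Jkuᵀ * Jμ) (Jkuᵀ * Jku) := by
    rw [hH, hJ, transpose_fromCols, fromRows_mul_fromCols]
  have hCμ : (Jμᵀ * Jμ) *ᵥ (fun i => Δx (Sum.inl i))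
      + (Jμᵀ * Jku) *ᵥ (fun j => Δx (Sum.inr j)) = -(Jμᵀ *ᵥ r) := by
    funext i
    have := congrFun hnorm (Sum.inl i)
    rw [hHblocks, fromBlocks_mulVec] at this
    have hr : (-(Jᵀ *ᵥ r)) (Sum.inl i) = (-(Jμᵀ *ᵥ r)) i := by
      rw [hJt, fromRows_mulVec]; rfl
    rw [hr] at this
    exact this
  -- Pμ * (JμᵀJμ) * Jμᵀ = Jμᵀ
  have hF0 : Jμ * (Pμ * (Jμᵀ * Jμ)) = Jμ := aux_JPH Jμ Pμ hPμ.1 hPμ.2.2.2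
  have hF : Pμ * (Jμᵀ * Jμ) * Jμᵀ = Jμᵀ := by
    have := congrArg Matrix.transpose hF0
    rwa [transpose_mul, hPμ.2.2.2] at this
  -- conclude
  have hrearr : -(Jμᵀ *ᵥ r) - (Jμᵀ * Jku) *ᵥ (fun j => Δx (Sum.inr j))
      = (Jμᵀ * Jμ) *ᵥ (fun i => Δx (Sum.inl i)) := by
    rw [← hCμ]; abel
  rw [hrearr, hxμ, Matrix.mulVec_mulVec, Matrix.mulVec_mulVec, hF]
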